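/- Let G be a finite abelian group and A ⊆ G a finite set. Then Σ_{s ∈ G} E(A, A_s) = E₃(A), where the sum ranges over all s ∈ G (equivalently over s ∈ A − A, since A_s = ∅ otherwise). -/

import Mathlib

open Finset Pointwise

/-- The additive energy `E(A,B)`: the number of quadruples `(a₁, a₂, b₁, b₂)`
with `a₁ + b₁ = a₂ + b₂`. -/
def addE {G : Type*} [AddCommGroup G] [DecidableEq G] (A B : Finset G) : ℕ :=
  (((A ×ˢ A) ×ˢ B ×ˢ B).filter fun q => q.1.1 + q.2.1 = q.1.2 + q.2.2).card

section Aux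

set_option linter.unusedSectionVars false

variable {G : Type*} [AddCommGroup G] [Fintype G] [DecidableEq G]

/-- `nE A t = |A ∩ (A - t)|`, realized as a filter. -/
def nE (A : Finset G) (t : G) : ℕ := (A.filter fun x => x + t ∈ A).card

lemma inter_image_eq (A : Finset G) (s : G) :
    A ∩ A.image (fun a => a - s) = A.filter fun x => x + s ∈ A := by
  ext x
  simp only [mem_inter, mem_image, mem_filter]
  constructor
  · rintro ⟨hx, a, ha, rfl⟩
    exact ⟨hx, by simpa using ha⟩
  · rintro ⟨hx, h⟩
    exact ⟨hx, x + s, h, by simp⟩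

lemma boole_and (p q : Prop) [Decidable p] [Decidable q] :
    (if p ∧ q then 1 else 0 : ℕ) = (if p then 1 else 0) * (if q then 1 else 0) := by
  split_ifs <;> simp_all

lemma card_filter_univ (S : Finset G) (p : G → Prop) [DecidablePred p] :
    (S.filter p).card = ∑ x : G, if x ∈ S ∧ p x then 1 else 0 := by
  rw [card_filter]
  simp only [ite_and]
  rw [Finset.sum_ite_mem, univ_inter]

lemma addE_eq (A B : Finset G) : addE A B = ∑ t : G, nE A t * nE B t := by
  have hR : ∑ t : G, nE A t * nE B t
      = ∑ a₁ ∈ A, ∑ b₂ ∈ B, ∑ t : G,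
        ((if a₁ + t ∈ A then 1 else 0) * (if b₂ + t ∈ B then 1 else 0) : ℕ) := by
    simp only [nE, card_filter, Finset.sum_mul_sum]
    rw [Finset.sum_comm]
    exact sum_congr rfl fun a _ => Finset.sum_comm
  have hL : addE A B = ∑ a₁ ∈ A, ∑ b₂ ∈ B, ∑ a₂ ∈ A, ∑ b₁ ∈ B,
      (if a₁ + b₁ = a₂ + b₂ then 1 else 0 : ℕ) := by
    unfold addE
    rw [card_filter]
    simp only [Finset.sum_product]
    refine sum_congr rfl fun a₁ _ => ?_
    calc ∑ a₂ ∈ A, ∑ b₁ ∈ B, ∑ b₂ ∈ B, (if a₁ + b₁ = a₂ + b₂ then 1 else 0 : ℕ)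
        = ∑ a₂ ∈ A, ∑ b₂ ∈ B, ∑ b₁ ∈ B, (if a₁ + b₁ = a₂ + b₂ then 1 else 0 : ℕ) :=
          sum_congr rfl fun _ _ => Finset.sum_comm
      _ = ∑ b₂ ∈ B, ∑ a₂ ∈ A, ∑ b₁ ∈ B, (if a₁ + b₁ = a₂ + b₂ then 1 else 0 : ℕ) :=
          Finset.sum_comm
  rw [hL, hR]
  refine sum_congr rfl fun a₁ _ => sum_congr rfl fun b₂ _ => ?_
  have step1 : ∀ a₂ : G, ∑ b₁ ∈ B, (if a₁ + b₁ = a₂ + b₂ then 1 else 0 : ℕ)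
      = if a₂ + b₂ - a₁ ∈ B then 1 else 0 := by
    intro a₂
    rw [← Finset.sum_ite_eq' B (a₂ + b₂ - a₁) (fun _ => (1 : ℕ))]
    refine sum_congr rfl fun b₁ _ => ?_
    congr 1
    simp only [eq_iff_iff]
    constructor
    · intro h; rw [← h]; abel
    · intro h; rw [h]; abel
  simp only [step1]
  have step2 : (∑ a₂ ∈ A, if a₂ + b₂ - a₁ ∈ B then 1 else 0 : ℕ)
      = ∑ x : G, (if x ∈ A then 1 else 0 : ℕ) * (if x + b₂ - a₁ ∈ B then 1 else 0) := by
    rw [show (∑ x : G, (if x ∈ A then 1 else 0 : ℕ) * (if x + b₂ - a₁ ∈ B then 1 else 0))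
        = ∑ x : G, if x ∈ A then (if x + b₂ - a₁ ∈ B then 1 else 0 : ℕ) else 0 from
      sum_congr rfl fun x _ => by split_ifs <;> simp]
    rw [Finset.sum_ite_mem, univ_inter]
  rw [step2]
  refine Fintype.sum_equiv (Equiv.subRight a₁) _ _ fun x => ?_
  simp only [Equiv.subRight_apply]
  simp only [show a₁ + (x - a₁) = x from by abel, show b₂ + (x - a₁) = x + b₂ - a₁ from by abel]

lemma sum_nE_filter (A : Finset G) (t : G) :
    ∑ s : G, nE (A.filter fun x => x + s ∈ A) t = nE A t * nE A t := by
  have h1 : ∀ s : G, nE (A.filter fun x => x + s ∈ A) t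
      = ∑ x : G, (if x ∈ A ∧ x + t ∈ A then 1 else 0 : ℕ)
          * (if x + s ∈ A ∧ x + t + s ∈ A then 1 else 0) := by
    intro s
    rw [nE, card_filter_univ]
    refine sum_congr rfl fun x _ => ?_
    simp only [mem_filter]
    rw [← boole_and]
    congr 1
    simp only [eq_iff_iff]
    tauto
  simp only [h1]
  rw [Finset.sum_comm]
  have h2 : ∀ x : G, (∑ s : G, if x + s ∈ A ∧ x + t + s ∈ A then 1 else 0 : ℕ) = nE A t := by
    intro x
    rw [nE, card_filter_univ]
    refine Fintype.sum_equiv (Equiv.addLeft x) _ _ fun s => ?_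
    simp only [Equiv.coe_addLeft]
    simp only [show x + t + s = x + s + t from by abel]
    congr
  calc ∑ x : G, ∑ s : G, (if x ∈ A ∧ x + t ∈ A then 1 else 0 : ℕ)
          * (if x + s ∈ A ∧ x + t + s ∈ A then 1 else 0)
      = ∑ x : G, (if x ∈ A ∧ x + t ∈ A then 1 else 0 : ℕ) * nE A t := by
        refine sum_congr rfl fun x _ => ?_
        rw [← Finset.mul_sum, h2]
    _ = nE A t * nE A t := by
        rw [← Finset.sum_mul, ← card_filter_univ]
        rfl

end Aux

theorem energy_E3_identity {G : Type*} [AddCommGroup G] [Fintype G] [DecidableEq G]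
    (A : Finset G) :
    ∑ s : G, addE A (A ∩ A.image (fun a => a - s)) =
      ∑ s : G, (A ∩ A.image (fun a => a - s)).card ^ 3 := by
  simp only [inter_image_eq]
  simp only [addE_eq]
  rw [Finset.sum_comm]
  refine sum_congr rfl fun t _ => ?_
  rw [← Finset.mul_sum, sum_nE_filter]
  show nE A t * (nE A t * nE A t) = nE A t ^ 3
  ring
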